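/- The SONC cone C_{n,2d} is full-dimensional inside the cone P_{n,2d} of nonnegative n-variate polynomials of degree at most 2d: there exists f ∈ C_{n,2d} such that for every g ∈ P_{n,2d} there is ε > 0 with f + ε·g ∈ C_{n,2d}. -/

import Mathlib

open MvPolynomial

/-- A circuit polynomial in `n` variables, supported in the scaled standard simplex
`Δ_{n,2d}`. -/
def IsCircuit (n d : ℕ) (p : MvPolynomial (Fin n) ℝ) : Prop :=
  ∃ (r : ℕ) (α : Fin (r + 1) → Fin n → ℕ) (β : Fin n → ℕ)
    (c : Fin (r + 1) → ℝ) (cβ : ℝ) (lam : Fin (r + 1) → ℝ),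
    r ≤ n ∧
    (∀ j i, Even (α j i)) ∧
    AffineIndependent ℝ (fun j => (fun i => (α j i : ℝ)) : Fin (r + 1) → Fin n → ℝ) ∧
    (∀ j, 0 < c j) ∧ (∀ j, 0 < lam j) ∧ (∑ j, lam j = 1) ∧
    (∀ i, (β i : ℝ) = ∑ j, lam j * (α j i : ℝ)) ∧
    (∀ j, ∑ i, α j i ≤ 2 * d) ∧
    p = (∑ j, monomial (Finsupp.equivFunOnFinite.symm (α j)) (c j))
          + monomial (Finsupp.equivFunOnFinite.symm β) cβ

/-- A sum of nonnegative circuit polynomials, all supported in `Δ_{n,2d}`. -/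
def IsSONC (n d : ℕ) (p : MvPolynomial (Fin n) ℝ) : Prop :=
  ∃ (k : ℕ) (q : Fin k → MvPolynomial (Fin n) ℝ),
    (∀ i, IsCircuit n d (q i)) ∧
    (∀ i (x : Fin n → ℝ), 0 ≤ eval x (q i)) ∧
    p = ∑ i, q i

lemma sonc_zero (n d : ℕ) : IsSONC n d 0 :=
  ⟨0, fun _ => 0, fun i => i.elim0, fun i => i.elim0, by simp⟩

lemma sonc_add {n d : ℕ} {p q : MvPolynomial (Fin n) ℝ}
    (hp : IsSONC n d p) (hq : IsSONC n d q) : IsSONC n d (p + q) := by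
  obtain ⟨k1, f1, hc1, he1, rfl⟩ := hp
  obtain ⟨k2, f2, hc2, he2, rfl⟩ := hq
  refine ⟨k1 + k2, Fin.addCases f1 f2, ?_, ?_, ?_⟩
  · intro i
    refine Fin.addCases (fun j => ?_) (fun j => ?_) i <;> simp [hc1, hc2]
  · intro i x
    refine Fin.addCases (fun j => ?_) (fun j => ?_) i <;> simp [he1, he2]
  · rw [Fin.sum_univ_add]; simp

lemma sonc_sum {n d : ℕ} {ι : Type*} (s : Finset ι) (h : ι → MvPolynomial (Fin n) ℝ)
    (hs : ∀ i ∈ s, IsSONC n d (h i)) : IsSONC n d (∑ i ∈ s, h i) := by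
  classical
  induction s using Finset.induction_on with
  | empty => simpa using sonc_zero n d
  | insert _ _ hx ih =>
    rename_i a t
    rw [Finset.sum_insert hx]
    exact sonc_add (hs a (Finset.mem_insert_self a t))
      (ih fun i hi => hs i (Finset.mem_insert_of_mem hi))

lemma eval_monomial_fin {n : ℕ} (A : Fin n →₀ ℕ) (x : Fin n → ℝ) (t : ℝ) :
    eval x (monomial A t) = t * ∏ i, x i ^ A i := by
  rw [eval_monomial, Finsupp.prod_fintype]
  intro i; simp

lemma sonc_monomial {n d : ℕ} (A : Fin n →₀ ℕ) (t : ℝ)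
    (hA : ∀ i, Even (A i)) (hdeg : ∑ i, A i ≤ 2 * d) (ht : 0 ≤ t) :
    IsSONC n d (monomial A t) := by
  refine ⟨1, fun _ => monomial A t, fun _ => ?_, fun _ x => ?_, by simp⟩
  · refine ⟨0, fun _ => ⇑A, ⇑A, fun _ => 1, t - 1, fun _ => 1, Nat.zero_le n,
      fun _ => hA, by haveI : Subsingleton (Fin (0+1)) := ⟨fun a b => Fin.ext (by omega)⟩; exact affineIndependent_of_subsingleton ℝ _, fun _ => one_pos,
      fun _ => one_pos, by simp, fun i => by simp, fun _ => hdeg, ?_⟩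
    rw [Fin.sum_univ_one, Finsupp.equivFunOnFinite_symm_coe, ← map_add]
    norm_num
  · rw [eval_monomial_fin]
    exact mul_nonneg ht (Finset.prod_nonneg fun i _ => (hA i).pow_nonneg _)

lemma sonc_pair {n d : ℕ} (A0 A1 γ : Fin n →₀ ℕ) (c δ : ℝ)
    (h0 : ∀ i, Even (A0 i)) (h1 : ∀ i, Even (A1 i))
    (hsum : ∀ i, A0 i + A1 i = 2 * γ i)
    (hne : A0 ≠ A1)
    (hd0 : ∑ i, A0 i ≤ 2 * d) (hd1 : ∑ i, A1 i ≤ 2 * d)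
    (hc : 0 < c) (hδ : |δ| ≤ 2 * c) :
    IsSONC n d (monomial A0 c + monomial A1 c + monomial γ δ) := by
  have hY : ∀ x : Fin n → ℝ,
      (∏ i, x i ^ γ i) ^ 2 = (∏ i, x i ^ A0 i) * (∏ i, x i ^ A1 i) := by
    intro x
    rw [← Finset.prod_mul_distrib, ← Finset.prod_pow]
    refine Finset.prod_congr rfl fun i _ => ?_
    rw [← pow_add, hsum i]
    ring
  refine ⟨1, fun _ => monomial A0 c + monomial A1 c + monomial γ δ,
    fun _ => ?_, fun _ x => ?_, by simp⟩
  · have hn' : 1 ≤ n := by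
      by_contra h
      interval_cases n
      · exact hne (Finsupp.ext fun i => i.elim0)
    refine ⟨1, ![⇑A0, ⇑A1], ⇑γ, fun _ => c, δ, fun _ => 1/2, hn', ?_, ?_,
      fun _ => hc, fun _ => by norm_num, by rw [Fin.sum_univ_two]; norm_num,
      ?_, ?_, ?_⟩
    · intro j i
      fin_cases j
      · exact h0 i
      · exact h1 i
    · have hee : (fun j => (fun i => ((![⇑A0, ⇑A1]) j i : ℝ)) : Fin 2 → Fin n → ℝ)
          = ![fun i => (A0 i : ℝ), fun i => (A1 i : ℝ)] := by
        funext j i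
        fin_cases j <;> simp
      rw [hee]
      refine affineIndependent_of_ne ℝ ?_
      intro h
      apply hne
      ext i
      have := congrFun h i
      exact_mod_cast this
    · intro i
      rw [Fin.sum_univ_two]
      have := hsum i
      have : (A0 i : ℝ) + A1 i = 2 * γ i := by exact_mod_cast this
      simp only [Matrix.cons_val_zero, Matrix.cons_val_one, Matrix.head_cons]
      linarith
    · intro j
      fin_cases j
      · simpa using hd0
      · simpa using hd1
    · rw [Fin.sum_univ_two]
      simp only [Matrix.cons_val_zero, Matrix.cons_val_one, Matrix.head_cons,
        Finsupp.equivFunOnFinite_symm_coe]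
  · simp only [map_add, eval_monomial_fin]
    have hP0 : 0 ≤ ∏ i, x i ^ A0 i :=
      Finset.prod_nonneg fun i _ => (h0 i).pow_nonneg _
    have hP1 : 0 ≤ ∏ i, x i ^ A1 i :=
      Finset.prod_nonneg fun i _ => (h1 i).pow_nonneg _
    have h2 : -(|δ| * |∏ i, x i ^ γ i|) ≤ δ * ∏ i, x i ^ γ i := by
      rw [← abs_mul]; exact neg_abs_le _
    have h3 : |δ| * |∏ i, x i ^ γ i| ≤ (2*c) * |∏ i, x i ^ γ i| :=
      mul_le_mul_of_nonneg_right hδ (abs_nonneg _)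
    have h4 : 2 * |∏ i, x i ^ γ i| ≤ (∏ i, x i ^ A0 i) + ∏ i, x i ^ A1 i := by
      nlinarith [sq_nonneg ((∏ i, x i ^ A0 i) - ∏ i, x i ^ A1 i),
        sq_abs (∏ i, x i ^ γ i), abs_nonneg (∏ i, x i ^ γ i), hY x]
    nlinarith [mul_le_mul_of_nonneg_left h4 hc.le]


lemma exists_pair {n d : ℕ} (γ : Fin n →₀ ℕ) (hdeg : ∑ i, γ i ≤ 2 * d)
    (hodd : ¬ ∀ i, Even (γ i)) :
    ∃ A0 A1 : Fin n →₀ ℕ, (∀ i, Even (A0 i)) ∧ (∀ i, Even (A1 i)) ∧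
      (∀ i, A0 i + A1 i = 2 * γ i) ∧ A0 ≠ A1 ∧
      (∑ i, A0 i ≤ 2 * d) ∧ (∑ i, A1 i ≤ 2 * d) := by
  classical
  set O : Finset (Fin n) := Finset.univ.filter (fun i => ¬ Even (γ i)) with hO
  have hmemO : ∀ i, i ∈ O ↔ ¬ Even (γ i) := by intro i; simp [hO]
  obtain ⟨P, hPO, hPcard⟩ :=
    Finset.exists_subset_card_eq (Nat.div_le_self O.card 2)
  have hOpos : ∀ i ∈ O, 1 ≤ γ i := by
    intro i hi
    rcases Nat.even_or_odd (γ i) with h | h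
    · exact absurd h ((hmemO i).mp hi)
    · rcases h with ⟨k, hk⟩; omega
  set a0 : Fin n → ℕ := fun i => if i ∈ P then γ i + 1 else if i ∈ O then γ i - 1 else γ i
    with ha0
  set a1 : Fin n → ℕ := fun i => if i ∈ P then γ i - 1 else if i ∈ O then γ i + 1 else γ i
    with ha1
  have hsum : ∀ i, a0 i + a1 i = 2 * γ i := by
    intro i
    simp only [ha0, ha1]
    split_ifs with h1 h2
    · have := hOpos i (hPO h1); omega
    · have := hOpos i h2; omega
    · omega
  have hev0 : ∀ i, Even (a0 i) := by
    intro i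
    simp only [ha0]
    split_ifs with h1 h2
    · have h := (hmemO i).mp (hPO h1)
      rcases Nat.even_or_odd (γ i) with h' | h'
      · exact absurd h' h
      · rcases h' with ⟨k, hk⟩; exact ⟨k+1, by omega⟩
    · have h := (hmemO i).mp h2
      rcases Nat.even_or_odd (γ i) with h' | h'
      · exact absurd h' h
      · rcases h' with ⟨k, hk⟩; exact ⟨k, by omega⟩
    · by_contra hcon
      exact h2 ((hmemO i).mpr hcon)
  have hev1 : ∀ i, Even (a1 i) := by
    intro i
    have h2 := hsum i
    rcases hev0 i with ⟨k, hk⟩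
    exact ⟨γ i - k, by omega⟩
  have hcount : ∀ Q : Finset (Fin n), (∑ i, (if i ∈ Q then 1 else 0)) = Q.card := by
    intro Q; simp [Finset.sum_ite_mem]
  have hid0 : (∑ i, a0 i) + (O \ P).card = (∑ i, γ i) + P.card := by
    rw [← hcount (O \ P), ← hcount P, ← Finset.sum_add_distrib, ← Finset.sum_add_distrib]
    refine Finset.sum_congr rfl fun i _ => ?_
    simp only [ha0, Finset.mem_sdiff]
    by_cases hp : i ∈ P
    · simp [hp]
    · by_cases ho : i ∈ O
      · have := hOpos i ho; simp [hp, ho]; omega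
      · simp [hp, ho]
  have hid1 : (∑ i, a1 i) + P.card = (∑ i, γ i) + (O \ P).card := by
    rw [← hcount (O \ P), ← hcount P, ← Finset.sum_add_distrib, ← Finset.sum_add_distrib]
    refine Finset.sum_congr rfl fun i _ => ?_
    simp only [ha1, Finset.mem_sdiff]
    by_cases hp : i ∈ P
    · have := hOpos i (hPO hp); simp [hp, hPO hp]; omega
    · by_cases ho : i ∈ O
      · simp [hp, ho]
      · simp [hp, ho]
  have hcardsd : (O \ P).card = O.card - P.card := Finset.card_sdiff_of_subset hPO
  have hple : P.card ≤ O.card := Finset.card_le_card hPO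
  have hpar : (∑ i, γ i) % 2 = O.card % 2 := by
    rw [← hcount O, Finset.sum_nat_mod,
      Finset.sum_nat_mod Finset.univ 2 (fun i => if i ∈ O then 1 else 0)]
    congr 1
    refine Finset.sum_congr rfl fun i _ => ?_
    by_cases ho : i ∈ O
    · have h := (hmemO i).mp ho
      rcases Nat.even_or_odd (γ i) with h' | h'
      · exact absurd h' h
      · rcases h' with ⟨k, hk⟩; simp [ho]; omega
    · have h : Even (γ i) := by
        by_contra hcon; exact ho ((hmemO i).mpr hcon)
      rcases h with ⟨k, hk⟩; simp [ho]; omega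
  have hOne : ∃ i₀, i₀ ∈ O := by
    push_neg at hodd
    obtain ⟨i₀, hi₀⟩ := hodd
    exact ⟨i₀, (hmemO i₀).mpr hi₀⟩
  obtain ⟨i₀, hi₀⟩ := hOne
  have hne' : a0 i₀ ≠ a1 i₀ := by
    have := hOpos i₀ hi₀
    simp only [ha0, ha1]
    by_cases hp : i₀ ∈ P
    · simp only [if_pos hp]; omega
    · simp only [if_neg hp, if_pos hi₀]; omega
  refine ⟨Finsupp.equivFunOnFinite.symm a0, Finsupp.equivFunOnFinite.symm a1,
    ?_, ?_, ?_, ?_, ?_, ?_⟩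
  · intro i; simpa using hev0 i
  · intro i; simpa using hev1 i
  · intro i; simpa using hsum i
  · intro h
    exact hne' (congrFun (Finsupp.equivFunOnFinite.symm.injective h) i₀)
  · have : (∑ i, (Finsupp.equivFunOnFinite.symm a0) i) = ∑ i, a0 i := by
      refine Finset.sum_congr rfl fun i _ => ?_; simp
    rw [this]; omega
  · have : (∑ i, (Finsupp.equivFunOnFinite.symm a1) i) = ∑ i, a1 i := by
      refine Finset.sum_congr rfl fun i _ => ?_; simp
    rw [this]; omega


/-- The SONC cone `C_{n,2d}` is full-dimensional in the cone of
nonnegative polynomials of degree at most `2d`. -/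
theorem sonc_cone_full_dimensional (n d : ℕ) (hn : 1 ≤ n) (hd : 1 ≤ d) :
    ∃ f : MvPolynomial (Fin n) ℝ, IsSONC n d f ∧
      ∀ g : MvPolynomial (Fin n) ℝ,
        g.totalDegree ≤ 2 * d → (∀ x : Fin n → ℝ, 0 ≤ eval x g) →
        ∃ ε : ℝ, 0 < ε ∧ IsSONC n d (f + C ε * g) := by
  classical
  set E : Finset (Fin n →₀ ℕ) :=
    (Finset.Iic (Finsupp.equivFunOnFinite.symm (fun _ => 2 * d))).filter
      (fun α => (∀ i, Even (α i)) ∧ ∑ i, α i ≤ 2 * d) with hE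
  have hmemE : ∀ A : Fin n →₀ ℕ, (∀ i, Even (A i)) → (∑ i, A i ≤ 2 * d) → A ∈ E := by
    intro A h1 h2
    refine Finset.mem_filter.mpr ⟨Finset.mem_Iic.mpr ?_, h1, h2⟩
    rw [Finsupp.le_def]
    intro i
    have : A i ≤ ∑ j, A j := Finset.single_le_sum (fun j _ => Nat.zero_le _) (Finset.mem_univ i)
    simpa using le_trans this h2
  have hEprop : ∀ A ∈ E, (∀ i, Even (A i)) ∧ ∑ i, A i ≤ 2 * d :=
    fun A hA => (Finset.mem_filter.mp hA).2
  refine ⟨∑ α ∈ E, monomial α 1, ?_, ?_⟩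
  · exact sonc_sum E _ fun α hα =>
      sonc_monomial α 1 (hEprop α hα).1 (hEprop α hα).2 zero_le_one
  · intro g hgdeg hgpos
    have hγdeg : ∀ γ ∈ g.support, ∑ i, γ i ≤ 2 * d := by
      intro γ hγ
      have h1 : γ.sum (fun _ e => e) ≤ g.totalDegree := MvPolynomial.le_totalDegree hγ
      have h2 : γ.sum (fun _ e => e) = ∑ i, γ i := Finsupp.sum_fintype _ _ (fun i => rfl)
      omega
    set m : ℕ := g.support.card with hm
    set c : ℝ := 1 / (2 * ((m : ℝ) + 1)) with hc
    have hc0 : 0 < c := by rw [hc]; positivity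
    set M : ℝ := ∑ γ ∈ g.support, |coeff γ g| with hM
    have hM0 : 0 ≤ M := Finset.sum_nonneg fun _ _ => abs_nonneg _
    set ε : ℝ := c / (M + 1) with hε
    have hε0 : 0 < ε := by rw [hε]; positivity
    have hδ : ∀ γ ∈ g.support, |ε * coeff γ g| ≤ 2 * c := by
      intro γ hγ
      have h1 : |coeff γ g| ≤ M := by
        rw [hM]
        exact Finset.single_le_sum (f := fun γ => |coeff γ g|) (fun _ _ => abs_nonneg _) hγ
      have h2 : |ε * coeff γ g| = ε * |coeff γ g| := by rw [abs_mul, abs_of_pos hε0]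
      rw [h2, hε, div_mul_eq_mul_div, div_le_iff₀ (by linarith)]
      nlinarith [mul_le_mul_of_nonneg_left h1 hc0.le, mul_nonneg hc0.le hM0]
    have H : ∀ γ : Fin n →₀ ℕ, ∃ A0 A1 : Fin n →₀ ℕ, γ ∈ g.support →
        A0 ∈ E ∧ A1 ∈ E ∧
        IsSONC n d (monomial A0 c + monomial A1 c + monomial γ (ε * coeff γ g)) := by
      intro γ
      by_cases hγ : γ ∈ g.support
      · by_cases hev : ∀ i, Even (γ i)
        · refine ⟨γ, γ, fun _ => ⟨hmemE γ hev (hγdeg γ hγ), hmemE γ hev (hγdeg γ hγ), ?_⟩⟩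
          have heq : (monomial γ c + monomial γ c + monomial γ (ε * coeff γ g)
              : MvPolynomial (Fin n) ℝ) = monomial γ (c + c + ε * coeff γ g) := by
            rw [← map_add, ← map_add]
          rw [heq]
          refine sonc_monomial γ _ hev (hγdeg γ hγ) ?_
          have h3 := hδ γ hγ
          have h4 := neg_abs_le (ε * coeff γ g)
          linarith
        · obtain ⟨A0, A1, he0, he1, hsum, hne, hd0, hd1⟩ :=
            exists_pair γ (hγdeg γ hγ) hev
          exact ⟨A0, A1, fun _ => ⟨hmemE A0 he0 hd0, hmemE A1 he1 hd1,
            sonc_pair A0 A1 γ c _ he0 he1 hsum hne hd0 hd1 hc0 (hδ γ hγ)⟩⟩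
      · exact ⟨0, 0, fun h => absurd h hγ⟩
    choose v0 v1 hv using H
    refine ⟨ε, hε0, ?_⟩
    set w : (Fin n →₀ ℕ) → ℝ := fun α =>
      ∑ γ ∈ g.support, ((if v0 γ = α then 1 else 0) + (if v1 γ = α then 1 else 0)) with hw
    have hw2 : ∀ α, w α ≤ 2 * m := by
      intro α
      have h1 : w α ≤ ∑ γ ∈ g.support, (2:ℝ) :=
        Finset.sum_le_sum fun γ _ => by split_ifs <;> norm_num
      rw [Finset.sum_const, nsmul_eq_mul, ← hm] at h1
      linarith
    have hcw : ∀ α, c * w α ≤ 1 := by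
      intro α
      have h1 : c * w α ≤ c * (2 * m) := mul_le_mul_of_nonneg_left (hw2 α) hc0.le
      have h2 : c * (2 * (m:ℝ)) ≤ 1 := by
        rw [hc, div_mul_eq_mul_div, div_le_one (by positivity)]
        push_cast
        nlinarith [Nat.cast_nonneg (α := ℝ) m]
      linarith
    have hgsum : C ε * g = ∑ γ ∈ g.support, monomial γ (ε * coeff γ g) := by
      conv_lhs => rw [← support_sum_monomial_coeff g]
      rw [Finset.mul_sum]
      exact Finset.sum_congr rfl fun γ _ => C_mul_monomial
    have hVsum : ∑ γ ∈ g.support, (monomial (v0 γ) c + monomial (v1 γ) c)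
        = ∑ α ∈ E, monomial α (c * w α) := by
      have step1 : ∀ α, (monomial α (c * w α) : MvPolynomial (Fin n) ℝ)
          = ∑ γ ∈ g.support, ((if v0 γ = α then monomial α c else 0)
              + (if v1 γ = α then monomial α c else 0)) := by
        intro α
        rw [hw]
        simp only [Finset.mul_sum, map_sum]
        refine Finset.sum_congr rfl fun γ _ => ?_
        rw [mul_add, map_add]
        congr 1 <;> split_ifs <;> simp
      rw [Finset.sum_congr rfl (fun α _ => step1 α), Finset.sum_comm]
      refine Finset.sum_congr rfl fun γ hγ => ?_
      rw [Finset.sum_add_distrib]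
      congr 1
      · rw [Finset.sum_ite_eq]; simp [(hv γ hγ).1]
      · rw [Finset.sum_ite_eq]; simp [(hv γ hγ).2.1]
    have key : (∑ α ∈ E, monomial α (1:ℝ)) + C ε * g
        = (∑ γ ∈ g.support, (monomial (v0 γ) c + monomial (v1 γ) c
            + monomial γ (ε * coeff γ g)))
          + ∑ α ∈ E, monomial α (1 - c * w α) := by
      have h3 : ∑ α ∈ E, (monomial α (1 - c * w α) : MvPolynomial (Fin n) ℝ)
          = (∑ α ∈ E, monomial α (1:ℝ)) - ∑ α ∈ E, monomial α (c * w α) := by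
        rw [← Finset.sum_sub_distrib]
        exact Finset.sum_congr rfl fun α _ => map_sub _ _ _
      rw [Finset.sum_add_distrib, hVsum, hgsum, h3]
      ring
    rw [key]
    refine sonc_add (sonc_sum _ _ fun γ hγ => (hv γ hγ).2.2)
      (sonc_sum _ _ fun α hα => ?_)
    refine sonc_monomial α _ (hEprop α hα).1 (hEprop α hα).2 ?_
    linarith [hcw α]
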